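/- Let f be a log-concave probability density function on ℝ with mean zero and variance one, and let F be its cumulative distribution function. Then for all t ≥ 0, 1 − F(t) ≤ 2·e^{−t/10}. -/

import Mathlib

open MeasureTheory Set
open scoped ENNReal

noncomputable section

/-- A function `f : ℝ → ℝ` is log-concave if
`f(λx + (1-λ)y) ≥ f(x)^λ f(y)^{1-λ}` for all `x, y` and `λ ∈ (0,1)`. -/
def IsLogConcaveFun (f : ℝ → ℝ) : Prop :=
  ∀ x y : ℝ, ∀ l ∈ Set.Ioo (0 : ℝ) 1,
    f x ^ l * f y ^ (1 - l) ≤ f (l * x + (1 - l) * y)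

set_option maxHeartbeats 2000000 in
/-- For a log-concave probability density `f` on `ℝ` with mean zero and variance one,
with cdf `F(t) = ∫_{-∞}^t f`: for all `t ≥ 0`, `1 - F(t) ≤ 2 e^{-t/10}`. -/
theorem logconcave_tail_bound
    (f : ℝ → ℝ) (hf : ∀ x, 0 ≤ f x) (hlc : IsLogConcaveFun f)
    (hprob : ∫ x, f x = 1) (hmean : ∫ x, x * f x = 0)
    (hvar : ∫ x, x ^ 2 * f x = 1) :
    ∀ t : ℝ, 0 ≤ t → 1 - (∫ s in Set.Iic t, f s) ≤ 2 * Real.exp (-t / 10) := by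
  have hInt : Integrable f := by
    by_contra h
    rw [integral_undef h] at hprob
    norm_num at hprob
  have hInt2 : Integrable (fun x : ℝ => x ^ 2 * f x) := by
    by_contra h
    rw [integral_undef h] at hvar
    norm_num at hvar
  have htail : ∀ t : ℝ, 1 - (∫ s in Iic t, f s) = ∫ s in Ioi t, f s := by
    intro t
    have h := intervalIntegral.integral_Iic_add_Ioi (b := t) hInt.integrableOn hInt.integrableOn
    rw [hprob] at h
    linarith
  have hnn : ∀ s : Set ℝ, 0 ≤ ∫ x in s, f x := fun s => integral_nonneg hf
  have hle1 : ∀ t : ℝ, (∫ s in Ioi t, f s) ≤ 1 := by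
    intro t
    rw [← hprob]
    exact setIntegral_le_integral hInt (ae_of_all _ hf)
  have hvar_set : ∀ s : Set ℝ, (∫ x in s, x ^ 2 * f x) ≤ 1 := by
    intro s
    rw [← hvar]
    exact setIntegral_le_integral hInt2
      (ae_of_all _ fun x => mul_nonneg (sq_nonneg x) (hf x))
  have hcheb : ∀ t : ℝ, 0 < t → (∫ s in Ioi t, f s) ≤ 1 / t ^ 2 := by
    intro t ht
    have h1 : (∫ s in Ioi t, f s) ≤ ∫ s in Ioi t, (s ^ 2 * f s) / t ^ 2 := by
      refine setIntegral_mono_on hInt.integrableOn (hInt2.integrableOn.div_const _)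
        measurableSet_Ioi (fun s hs => ?_)
      rw [Set.mem_Ioi] at hs
      rw [le_div_iff₀ (by positivity)]
      have h2 : t ^ 2 ≤ s ^ 2 := by nlinarith
      nlinarith [mul_nonneg (hf s) (sub_nonneg.2 h2)]
    rw [integral_div] at h1
    have h2 := hvar_set (Ioi t)
    have ht2 : (0:ℝ) < t ^ 2 := by positivity
    calc (∫ s in Ioi t, f s) ≤ (∫ s in Ioi t, s ^ 2 * f s) / t ^ 2 := h1
      _ ≤ 1 / t ^ 2 := by gcongr
  have hchebL : (∫ s in Iic (-2 : ℝ), f s) ≤ 1 / 4 := by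
    have h1 : (∫ s in Iic (-2:ℝ), f s) ≤ ∫ s in Iic (-2:ℝ), (s ^ 2 * f s) / 4 := by
      refine setIntegral_mono_on hInt.integrableOn (hInt2.integrableOn.div_const _)
        measurableSet_Iic (fun s hs => ?_)
      rw [Set.mem_Iic] at hs
      rw [le_div_iff₀ (by norm_num)]
      have h2 : (4:ℝ) ≤ s ^ 2 := by nlinarith
      nlinarith [mul_nonneg (hf s) (sub_nonneg.2 h2)]
    rw [integral_div] at h1
    have h2 := hvar_set (Iic (-2 : ℝ))
    linarith
  have hmid : (1:ℝ)/2 ≤ ∫ s in Ioc (-2:ℝ) 2, f s := by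
    have e1 : (∫ s in Iic (2:ℝ), f s) - (∫ s in Iic (-2:ℝ), f s)
        = ∫ s in Ioc (-2:ℝ) 2, f s := by
      rw [intervalIntegral.integral_Iic_sub_Iic hInt.integrableOn hInt.integrableOn,
        intervalIntegral.integral_of_le (by norm_num)]
    have e2 := htail 2
    have e3 := hcheb 2 (by norm_num)
    norm_num at e3
    linarith
  obtain ⟨x₀, hx₀mem, hx₀⟩ : ∃ x₀ ∈ Ioc (-2:ℝ) 2, (1:ℝ)/16 ≤ f x₀ := by
    by_contra h
    push_neg at h
    have hb : (∫ s in Ioc (-2:ℝ) 2, f s) ≤ ∫ s in Ioc (-2:ℝ) 2, (1:ℝ)/16 := by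
      refine setIntegral_mono_on hInt.integrableOn ?_ measurableSet_Ioc
        (fun s hs => le_of_lt (h s hs))
      exact integrableOn_const (by rw [Real.volume_Ioc]; exact ENNReal.ofReal_ne_top)
    rw [setIntegral_const, Real.volume_real_Ioc] at hb
    norm_num at hb
    linarith
  obtain ⟨a, hamem, ha⟩ : ∃ a ∈ Ioc (6:ℝ) 12, f a ≤ 1/100 := by
    by_contra h
    push_neg at h
    have h1 : (∫ s in Ioc (6:ℝ) 12, (1:ℝ)/100) ≤ ∫ s in Ioc (6:ℝ) 12, f s := by
      refine setIntegral_mono_on ?_ hInt.integrableOn measurableSet_Ioc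
        (fun s hs => le_of_lt (h s hs))
      exact integrableOn_const (by rw [Real.volume_Ioc]; exact ENNReal.ofReal_ne_top)
    have h2 : (∫ s in Ioc (6:ℝ) 12, f s) ≤ ∫ s in Ioi (6:ℝ), f s :=
      setIntegral_mono_set hInt.integrableOn (ae_of_all _ hf)
        (HasSubset.Subset.eventuallyLE Ioc_subset_Ioi_self)
    have h3 := hcheb 6 (by norm_num)
    rw [setIntegral_const, Real.volume_real_Ioc] at h1
    norm_num at h1 h3
    linarith
  intro t ht
  rw [htail t]
  obtain ⟨hx₀l, hx₀r⟩ := hx₀mem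
  obtain ⟨hal, har⟩ := hamem
  rcases le_or_gt t 4 with h4 | h4
  · -- trivial region
    have hEN : Real.exp (-t/10) * Real.exp (t/10) = 1 := by
      rw [← Real.exp_add, show -t/10 + t/10 = (0:ℝ) by ring, Real.exp_zero]
    have he : Real.exp (t/10) ≤ 2 := by
      have h1 : Real.exp (t/10) ≤ Real.exp ((2:ℝ)/5) := Real.exp_le_exp.2 (by linarith)
      have h2 : Real.exp ((2:ℝ)/5) = Real.exp ((1:ℝ)/5) * Real.exp ((1:ℝ)/5) := by
        rw [← Real.exp_add]; norm_num
      have h3 : Real.exp ((1:ℝ)/5) ≤ 5/4 := by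
        have hh := Real.add_one_le_exp (-(1/5) : ℝ)
        rw [Real.exp_neg] at hh
        have hp := Real.exp_pos ((1:ℝ)/5)
        have hc := mul_inv_cancel₀ (ne_of_gt hp)
        nlinarith
      nlinarith [Real.exp_pos ((1:ℝ)/5)]
    have : (1:ℝ) ≤ 2 * Real.exp (-t/10) := by
      nlinarith [Real.exp_pos (-t/10)]
    linarith [hle1 t]
  rcases lt_or_ge t 12 with h12 | h12
  · -- Chebyshev region
    have hc := hcheb t (by linarith)
    have h1 : (1:ℝ)/t^2 ≤ 1/16 := by
      rw [div_le_div_iff₀ (by positivity) (by norm_num)]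
      nlinarith
    have hEN : Real.exp (-t/10) * Real.exp (t/10) = 1 := by
      rw [← Real.exp_add, show -t/10 + t/10 = (0:ℝ) by ring, Real.exp_zero]
    have he : Real.exp (t/10) ≤ 8 := by
      have hx : Real.exp (t/10) ≤ Real.exp (2:ℝ) := Real.exp_le_exp.2 (by linarith)
      have e2 : Real.exp (2:ℝ) = Real.exp 1 * Real.exp 1 := by
        rw [← Real.exp_add]; norm_num
      have hE1 : Real.exp 1 ≤ 2.72 := by
        have := Real.exp_one_lt_d9
        norm_num at this ⊢
        linarith
      nlinarith [Real.exp_pos 1]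
    have : (1:ℝ)/16 ≤ 2 * Real.exp (-t/10) := by
      nlinarith [Real.exp_pos (-t/10)]
    linarith
  · -- exponential decay region, t ≥ 12 ≥ a
    have hx0a : x₀ < a := by linarith
    have hfx₀ : 0 < f x₀ := by linarith
    have hax : 0 < a - x₀ := by linarith
    by_cases hfa : f a = 0
    · have hzero : ∀ s, a < s → f s = 0 := by
        intro s hs
        by_contra hne
        have hfs : 0 < f s := lt_of_le_of_ne (hf s) (Ne.symm hne)
        have hsx : 0 < s - x₀ := by linarith
        set l : ℝ := (s - a)/(s - x₀) with hl
        have hl0 : 0 < l := div_pos (by linarith) hsx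
        have hl1 : l < 1 := by rw [hl, div_lt_one hsx]; linarith
        have hkey := hlc x₀ s l ⟨hl0, hl1⟩
        have hpt : l * x₀ + (1 - l) * s = a := by
          have hne' : s - x₀ ≠ 0 := ne_of_gt hsx
          rw [hl]
          field_simp
          ring
        rw [hpt, hfa] at hkey
        have hpos : 0 < f x₀ ^ l * f s ^ (1 - l) :=
          mul_pos (Real.rpow_pos_of_pos hfx₀ _) (Real.rpow_pos_of_pos hfs _)
        linarith
      have hz : (∫ s in Ioi t, f s) ≤ 0 := by
        have hb : (∫ s in Ioi t, f s) ≤ ∫ s in Ioi t, (0:ℝ) := by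
          refine setIntegral_mono_on hInt.integrableOn (integrable_zero _ _ _)
            measurableSet_Ioi (fun s hs => ?_)
          rw [Set.mem_Ioi] at hs
          exact le_of_eq (hzero s (by linarith))
        simpa using hb
      have := Real.exp_pos (-t/10)
      linarith
    · have hfa' : 0 < f a := lt_of_le_of_ne (hf a) (Ne.symm hfa)
      set L : ℝ := Real.log (f x₀ / f a) / (a - x₀) with hL
      have hratio : (25:ℝ)/4 ≤ f x₀ / f a := by
        rw [le_div_iff₀ hfa']
        nlinarith
      have hE1 : Real.exp 1 ≤ 2.72 := by
        have := Real.exp_one_lt_d9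
        norm_num at this ⊢
        linarith
      have hlog : ((7:ℝ)/5) ≤ Real.log (f x₀ / f a) := by
        have h1 : Real.exp ((7:ℝ)/5) ≤ 25/4 := by
          have e2 : Real.exp ((7:ℝ)/5) = Real.exp 1 * Real.exp ((2:ℝ)/5) := by
            rw [← Real.exp_add]; norm_num
          have e3 : Real.exp ((2:ℝ)/5) ≤ 5/3 := by
            have hh := Real.add_one_le_exp (-(2/5) : ℝ)
            rw [Real.exp_neg] at hh
            have hp := Real.exp_pos ((2:ℝ)/5)
            have hc := mul_inv_cancel₀ (ne_of_gt hp)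
            nlinarith
          nlinarith [Real.exp_pos 1]
        calc ((7:ℝ)/5) ≤ Real.log (25/4) := by
              rw [Real.le_log_iff_exp_le (by norm_num)]; exact h1
          _ ≤ Real.log (f x₀ / f a) := Real.log_le_log (by norm_num) hratio
      have hL10 : (1:ℝ)/10 ≤ L := by
        rw [hL, le_div_iff₀ hax]
        nlinarith
      have hLpos : 0 < L := lt_of_lt_of_le (by norm_num) hL10
      have hdecay : ∀ s, a < s → f s ≤ f a * Real.exp (L*a) * Real.exp (-(L*s)) := by
        intro s hs
        rcases eq_or_lt_of_le (hf s) with hfs | hfs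
        · rw [← hfs]; positivity
        have hsx : 0 < s - x₀ := by linarith
        set l : ℝ := (s - a)/(s - x₀) with hl
        have hl0 : 0 < l := div_pos (by linarith) hsx
        have hl1 : l < 1 := by rw [hl, div_lt_one hsx]; linarith
        have hkey := hlc x₀ s l ⟨hl0, hl1⟩
        have hpt : l * x₀ + (1 - l) * s = a := by
          have hne' : s - x₀ ≠ 0 := ne_of_gt hsx
          rw [hl]; field_simp; ring
        rw [hpt] at hkey
        have hlhs : 0 < f x₀ ^ l * f s ^ (1 - l) :=
          mul_pos (Real.rpow_pos_of_pos hfx₀ _) (Real.rpow_pos_of_pos hfs _)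
        have hlog2 := Real.log_le_log hlhs hkey
        rw [Real.log_mul (ne_of_gt (Real.rpow_pos_of_pos hfx₀ _))
            (ne_of_gt (Real.rpow_pos_of_pos hfs _)),
          Real.log_rpow hfx₀, Real.log_rpow hfs] at hlog2
        have hmul := mul_le_mul_of_nonneg_left hlog2 hsx.le
        have hexp : (s - x₀) * (l * Real.log (f x₀) + (1 - l) * Real.log (f s))
            = (s - a) * Real.log (f x₀) + (a - x₀) * Real.log (f s) := by
          rw [hl]; field_simp; ring
        rw [hexp] at hmul
        have heq : L * (s - a) * (a - x₀)
            = (Real.log (f x₀) - Real.log (f a)) * (s - a) := by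
          rw [hL, Real.log_div (ne_of_gt hfx₀) (ne_of_gt hfa')]
          field_simp
        have hgoal : Real.log (f s) ≤ Real.log (f a) - L * (s - a) := by
          nlinarith [hmul, heq, hax]
        calc f s = Real.exp (Real.log (f s)) := (Real.exp_log hfs).symm
          _ ≤ Real.exp (Real.log (f a) - L * (s - a)) := Real.exp_le_exp.2 hgoal
          _ = f a * Real.exp (L*a) * Real.exp (-(L*s)) := by
              rw [Real.exp_sub, Real.exp_log hfa', mul_assoc, ← Real.exp_add,
                show (L * a : ℝ) + -(L*s) = -(L * (s - a)) by ring,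
                Real.exp_neg, div_eq_mul_inv]
      have hIb : (∫ s in Ioi t, f s)
          ≤ ∫ s in Ioi t, f a * Real.exp (L*a) * Real.exp (-(L*s)) := by
        refine setIntegral_mono_on hInt.integrableOn ?_ measurableSet_Ioi
          (fun s hs => hdecay s (by rw [Set.mem_Ioi] at hs; linarith))
        have hi : IntegrableOn (fun s : ℝ => Real.exp (-(L*s))) (Ioi t) := by
          have := exp_neg_integrableOn_Ioi t hLpos
          simpa [neg_mul] using this
        exact hi.const_mul _
      have hIv : (∫ s in Ioi t, Real.exp (-(L*s))) = Real.exp (-(L*t)) / L := by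
        have h := integral_comp_mul_left_Ioi (fun u : ℝ => Real.exp (-u)) t hLpos
        rw [integral_exp_neg_Ioi] at h
        rw [h, smul_eq_mul]
        field_simp [mul_comm]
      rw [integral_const_mul, hIv] at hIb
      -- final numeric bound
      have hxx : Real.exp (L*a) * Real.exp (-(L*t)) = Real.exp (-(L*(t-a))) := by
        rw [← Real.exp_add, show (L * a : ℝ) + -(L*t) = -(L * (t - a)) by ring]
      have h1 : Real.exp (L*a) * (Real.exp (-(L*t)) / L)
          = (1/L) * Real.exp (-(L*(t-a))) := by
        rw [← hxx]; ring
      have h3 : Real.exp (-(L*(t-a))) ≤ Real.exp (-((t-a)/10)) := by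
        apply Real.exp_le_exp.2
        have hta : (0:ℝ) ≤ t - a := by linarith
        nlinarith
      have h5 : Real.exp (-((t-a)/10)) = Real.exp (a/10) * Real.exp (-t/10) := by
        rw [← Real.exp_add]; norm_num; ring_nf
      have h6 : Real.exp (a/10 : ℝ) ≤ 8 := by
        have hx : Real.exp (a/10) ≤ Real.exp (2:ℝ) := Real.exp_le_exp.2 (by linarith)
        have e2 : Real.exp (2:ℝ) = Real.exp 1 * Real.exp 1 := by
          rw [← Real.exp_add]; norm_num
        nlinarith [hE1, Real.exp_pos 1]
      have h4 : f a * (1/L) ≤ 1/10 := by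
        rw [mul_one_div, div_le_iff₀ hLpos]
        nlinarith [hf a]
      have hfinal : f a * (Real.exp (L*a) * (Real.exp (-(L*t)) / L))
          ≤ 2 * Real.exp (-t/10) := by
        rw [h1]
        have hA : f a * ((1/L) * Real.exp (-(L*(t-a))))
            = (f a * (1/L)) * Real.exp (-(L*(t-a))) := by ring
        rw [hA]
        calc (f a * (1/L)) * Real.exp (-(L*(t-a)))
            ≤ (1/10) * Real.exp (-((t-a)/10)) := by
              apply mul_le_mul h4 h3 (Real.exp_pos _).le (by norm_num)
          _ = (1/10) * (Real.exp (a/10) * Real.exp (-t/10)) := by rw [h5]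
          _ ≤ 2 * Real.exp (-t/10) := by nlinarith [Real.exp_pos (-t/10), Real.exp_pos (a/10:ℝ)]
      calc (∫ s in Ioi t, f s) ≤ f a * Real.exp (L*a) * (Real.exp (-(L*t)) / L) := by
            rw [mul_assoc] at hIb ⊢; exact hIb
        _ ≤ 2 * Real.exp (-t/10) := by rw [mul_assoc]; exact hfinal
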